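/- Fix a real number δ > 0, an integer L ≥ 2, a real number α, and let η = δ or η = -δ. Define ε_j = (j - (L+1)/2)δ and P(u) = ∏_{j=1}^{L} (u - ε_j - η/2), and let S = {δ(k - L/2) : k = 1, ..., L-1}. Then for every M ≥ 1 and every tuple (v_1, ..., v_M) of pairwise distinct elements of S, the Bethe ansatz equations e^{2α} · P(v_k + η) · ∏_{j ≠ k} (v_k - v_j - η) = P(v_k) · ∏_{j ≠ k} (v_k - v_j + η) hold for all k = 1, ..., M (both sides being zero). In particular the associated energies E = 2∑_{k=1}^{M} v_k are independent of α. -/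

import Mathlib

/-- On the critical lines `η = ±δ`, every tuple of pairwise distinct elements of
`S = {δ(k - L/2) : k = 1, ..., L-1}` solves the Bethe ansatz equations
`e^{2α} P(v_k + η) ∏_{j≠k}(v_k - v_j - η) = P(v_k) ∏_{j≠k}(v_k - v_j + η)`,
both sides being zero; in particular the energies `E = 2∑_k v_k` are independent of `α`. -/
theorem stmt_3 (δ : ℝ) (hδ : 0 < δ) (L : ℕ) (hL : 2 ≤ L) (α : ℝ) (η : ℝ)
    (hη : η = δ ∨ η = -δ)
    (ε : ℕ → ℝ) (hε : ∀ j, ε j = ((j : ℝ) - ((L : ℝ) + 1) / 2) * δ)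
    (P : ℝ → ℝ) (hP : ∀ u, P u = ∏ j ∈ Finset.Icc 1 L, (u - ε j - η / 2))
    (M : ℕ) (hM : 1 ≤ M) (v : Fin M → ℝ) (hinj : Function.Injective v)
    (hvS : ∀ k, ∃ i ∈ Finset.Icc 1 (L - 1), v k = δ * ((i : ℝ) - (L : ℝ) / 2)) :
    ∀ k : Fin M,
      Real.exp (2 * α) * P (v k + η) * ∏ j ∈ Finset.univ.erase k, (v k - v j - η)
        = P (v k) * ∏ j ∈ Finset.univ.erase k, (v k - v j + η)
      ∧ P (v k) * ∏ j ∈ Finset.univ.erase k, (v k - v j + η) = 0 := by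
  intro k
  obtain ⟨i, hi, hvk⟩ := hvS k
  rw [Finset.mem_Icc] at hi
  have hi1 : 1 ≤ i := hi.1
  have hi2 : i + 1 ≤ L := by omega
  have hmem : i ∈ Finset.Icc 1 L := Finset.mem_Icc.mpr ⟨hi1, by omega⟩
  have hmem1 : i + 1 ∈ Finset.Icc 1 L := Finset.mem_Icc.mpr ⟨by omega, hi2⟩
  have hPvk : P (v k) = 0 := by
    rw [hP]
    rcases hη with h | h
    · exact Finset.prod_eq_zero hmem (by rw [hvk, hε, h]; ring)
    · refine Finset.prod_eq_zero hmem1 ?_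
      rw [hvk, hε, h]; push_cast; ring
  have hPvkη : P (v k + η) = 0 := by
    rw [hP]
    rcases hη with h | h
    · refine Finset.prod_eq_zero hmem1 ?_
      rw [hvk, hε, h]; push_cast; ring
    · exact Finset.prod_eq_zero hmem (by rw [hvk, hε, h]; ring)
  rw [hPvk, hPvkη]; exact ⟨by ring, by ring⟩
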